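/- Let X^n be uniform on {0,1}^n and Y^n the output of a memoryless BSC with crossover probability δ ∈ (0,1/2) with input X^n. With f(y^n) = y_1 (Dictator), the ratio G_s(X^n | f(Y^n)) / G_s(X^n) converges as n → ∞ to (1-2δ)·2^{-s} + 2δ. -/

import Mathlib

open Finset Filter

/-- Joint pmf of a uniform input `X^n` on `{0,1}^n` and the output `Y^n` of a memoryless
BSC with crossover probability `δ`. -/
noncomputable def bscJoint (δ : ℝ) (n : ℕ) (x y : Fin n → Bool) : ℝ :=
  (2 : ℝ) ^ (-(n : ℝ)) * ∏ i : Fin n, (if y i = x i then 1 - δ else δ)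

/-- The minimal conditional `s`-th guessing moment `G_s(X^n | f(Y^n))`: the infimum over all
guessing strategies (an ordering of `{0,1}^n` for each value of the one-bit help `f(Y^n)`)
of the `s`-th moment of the guessing time. -/
noncomputable def GcondBSC (s δ : ℝ) (n : ℕ) (f : (Fin n → Bool) → Bool) : ℝ :=
  sInf {m : ℝ | ∃ g : Bool → ((Fin n → Bool) ≃ Fin (2 ^ n)),
    m = ∑ x : Fin n → Bool, ∑ y : Fin n → Bool,
      bscJoint δ n x y * (((g (f y) x : ℕ) + 1 : ℝ)) ^ s}

/-- The unconditional guessing moment `G_s(X^n)` of a uniform vector on `{0,1}^n`. -/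
noncomputable def Gunif (s : ℝ) (n : ℕ) : ℝ :=
  (2 : ℝ) ^ (-(n : ℝ)) * ∑ i ∈ Finset.Icc (1 : ℕ) (2 ^ n), (i : ℝ) ^ s


lemma sum_cons_decomp {n : ℕ} (f : (Fin (n+1) → Bool) → ℝ) :
    ∑ y : Fin (n+1) → Bool, f y = ∑ b : Bool, ∑ t : Fin n → Bool, f (Fin.cons b t) := by
  rw [← Fintype.sum_prod_type (f := fun p : Bool × (Fin n → Bool) => f (Fin.cons p.1 p.2))]
  exact Fintype.sum_equiv (Fin.consEquiv (fun _ : Fin (n+1) => Bool)).symm _ _ (fun y => by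
    simp [Fin.consEquiv, Fin.cons_self_tail])

lemma sum_prod_one {n : ℕ} (δ : ℝ) (x : Fin n → Bool) :
    ∑ t : Fin n → Bool, ∏ i : Fin n, (if t i = x i then 1 - δ else δ) = 1 := by
  have h := Finset.prod_univ_sum (ι := Fin n) (fun _ => (Finset.univ : Finset Bool))
    (fun i c => if c = x i then 1 - δ else δ)
  rw [Fintype.piFinset_univ] at h
  rw [← h]
  have : ∀ i : Fin n, ∑ c : Bool, (if c = x i then 1 - δ else δ) = 1 := by
    intro i; cases x i <;> simp
  simp only [this, Finset.prod_const_one]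

lemma marg {n : ℕ} (δ : ℝ) (h : Bool → ℝ) (x : Fin (n+1) → Bool) :
    ∑ y : Fin (n+1) → Bool, bscJoint δ (n+1) x y * h (y 0)
    = (2:ℝ) ^ (-(((n:ℕ)+1 : ℕ) : ℝ)) * ((1-δ) * h (x 0) + δ * h (!(x 0))) := by
  rw [sum_cons_decomp (fun y => bscJoint δ (n+1) x y * h (y 0))]
  have key : ∀ b : Bool, ∑ t : Fin n → Bool, bscJoint δ (n+1) x (Fin.cons b t) * h b
      = (2:ℝ) ^ (-(((n:ℕ)+1 : ℕ) : ℝ)) * ((if b = x 0 then 1 - δ else δ) * h b) := by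
    intro b
    simp only [bscJoint, Fin.prod_univ_succ, Fin.cons_zero, Fin.cons_succ]
    rw [← Finset.sum_mul, ← Finset.mul_sum, ← Finset.mul_sum, sum_prod_one]
    ring
  simp only [Fin.cons_zero, key]
  cases x 0 <;> simp <;> ring

noncomputable def e0 (n : ℕ) : (Fin n → Bool) ≃ Fin (2^n) :=
  (Equiv.arrowCongr (Equiv.refl (Fin n)) finTwoEquiv.symm).trans finFunctionFinEquiv

noncomputable def gOptFun (n : ℕ) (b : Bool) (x : Fin (n+1) → Bool) : Fin (2^(n+1)) :=
  ⟨(if x 0 = b then 0 else 2^n) + (e0 n (Fin.tail x) : ℕ), by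
    have h := (e0 n (Fin.tail x)).isLt
    have : (2:ℕ)^(n+1) = 2^n + 2^n := by ring
    rw [this]
    split <;> omega⟩

lemma gOptFun_inj (n : ℕ) (b : Bool) : Function.Injective (gOptFun n b) := by
  intro x x' hxx
  have h := (e0 n (Fin.tail x)).isLt
  have h' := (e0 n (Fin.tail x')).isLt
  have hv : (if x 0 = b then 0 else 2^n) + (e0 n (Fin.tail x) : ℕ)
      = (if x' 0 = b then 0 else 2^n) + (e0 n (Fin.tail x') : ℕ) := congrArg Fin.val hxx
  have hcond : (x 0 = b) ↔ (x' 0 = b) := by split at hv <;> split at hv <;> simp_all <;> omega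
  have h0 : x 0 = x' 0 := by
    cases hb : x 0 <;> cases hb' : x' 0 <;> cases b <;> simp_all
  have htv : (e0 n (Fin.tail x) : ℕ) = (e0 n (Fin.tail x') : ℕ) := by
    split at hv <;> split at hv <;> simp_all
  have ht : Fin.tail x = Fin.tail x' := (e0 n).injective (Fin.val_injective htv)
  rw [← Fin.cons_self_tail x, ← Fin.cons_self_tail x', h0, ht]

noncomputable def gOpt (n : ℕ) (b : Bool) : (Fin (n+1) → Bool) ≃ Fin (2^(n+1)) :=
  Equiv.ofBijective (gOptFun n b)
    ((Fintype.bijective_iff_injective_and_card _).mpr ⟨gOptFun_inj n b, by simp [Fintype.card_fun]⟩)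

lemma gOpt_val (n : ℕ) (b : Bool) (x : Fin (n+1) → Bool) :
    (gOpt n b x : ℕ) = (if x 0 = b then 0 else 2^n) + (e0 n (Fin.tail x) : ℕ) := rfl

noncomputable def Asum (s : ℝ) (n : ℕ) : ℝ := ∑ j ∈ Finset.range (2^n), ((j:ℝ)+1)^s
noncomputable def Bsum (s : ℝ) (n : ℕ) : ℝ := ∑ j ∈ Finset.range (2^n), ((2^n : ℝ)+(j:ℝ)+1)^s

lemma opt_value (s δ : ℝ) (n : ℕ) :
    ∑ x : Fin (n+1) → Bool, ∑ y : Fin (n+1) → Bool,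
      bscJoint δ (n+1) x y * (((gOpt n (y 0) x : ℕ) + 1 : ℝ)) ^ s
    = (2:ℝ) ^ (-(((n:ℕ)+1 : ℕ) : ℝ)) * (2 * ((1-δ) * Asum s n + δ * Bsum s n)) := by
  have step1 : ∀ x : Fin (n+1) → Bool,
      ∑ y : Fin (n+1) → Bool, bscJoint δ (n+1) x y * (((gOpt n (y 0) x : ℕ) + 1 : ℝ)) ^ s
      = (2:ℝ) ^ (-(((n:ℕ)+1 : ℕ) : ℝ)) *
        ((1-δ) * (((e0 n (Fin.tail x) : ℕ) : ℝ) + 1) ^ s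
          + δ * ((2^n : ℝ) + ((e0 n (Fin.tail x) : ℕ) : ℝ) + 1) ^ s) := by
    intro x
    rw [marg δ (fun b => (((gOpt n b x : ℕ) + 1 : ℝ)) ^ s) x]
    congr 2
    · rw [gOpt_val]; simp
    · rw [gOpt_val]
      have : ¬ (x 0 = !(x 0)) := by cases x 0 <;> simp
      simp only [this, if_false]
      push_cast
      ring_nf
  simp only [step1]
  rw [← Finset.mul_sum]
  congr 1
  rw [sum_cons_decomp (fun x => (1-δ) * (((e0 n (Fin.tail x) : ℕ) : ℝ) + 1) ^ s
      + δ * ((2^n : ℝ) + ((e0 n (Fin.tail x) : ℕ) : ℝ) + 1) ^ s)]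
  simp only [Fin.tail_cons]
  have inner : ∀ b : Bool, ∑ t : Fin n → Bool,
      ((1-δ) * (((e0 n t : ℕ) : ℝ) + 1) ^ s + δ * ((2^n : ℝ) + ((e0 n t : ℕ) : ℝ) + 1) ^ s)
      = (1-δ) * Asum s n + δ * Bsum s n := by
    intro _
    rw [Fintype.sum_equiv (e0 n)
      (fun t => (1-δ) * (((e0 n t : ℕ) : ℝ) + 1) ^ s + δ * ((2^n : ℝ) + ((e0 n t : ℕ) : ℝ) + 1) ^ s)
      (fun j => (1-δ) * ((j:ℝ) + 1) ^ s + δ * ((2^n : ℝ) + (j:ℝ) + 1) ^ s) (fun t => rfl)]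
    rw [Finset.sum_add_distrib, ← Finset.mul_sum, ← Finset.mul_sum, Asum, Bsum,
      ← Fin.sum_univ_eq_sum_range (fun j => ((j:ℝ)+1)^s),
      ← Fin.sum_univ_eq_sum_range (fun j => ((2^n:ℝ)+(j:ℝ)+1)^s)]
  rw [inner true]
  rw [Fintype.sum_bool]
  ring

lemma fin_strictMono_le {k : ℕ} (f : Fin k → ℕ) (hf : StrictMono f) (j : Fin k) :
    (j : ℕ) ≤ f j := by
  obtain ⟨m, hm⟩ := j
  induction m with
  | zero => exact Nat.zero_le _
  | succ i ih =>
      have h1 : f ⟨i, by omega⟩ < f ⟨i+1, hm⟩ := hf (by simp [Fin.lt_def])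
      have h2 := ih (by omega)
      simp only at h2 ⊢
      omega

lemma subset_sum_ge (V : ℕ → ℝ) (hV : Monotone V) (T : Finset ℕ) :
    ∑ i ∈ Finset.range T.card, V i ≤ ∑ i ∈ T, V i := by
  have e := T.orderIsoOfFin (rfl : T.card = T.card)
  have hmono : StrictMono (fun j : Fin T.card => ((e j : ℕ))) :=
    fun a b h => by exact_mod_cast (e.strictMono h)
  calc ∑ i ∈ Finset.range T.card, V i = ∑ j : Fin T.card, V j := by
        rw [Fin.sum_univ_eq_sum_range]
    _ ≤ ∑ j : Fin T.card, V ((e j : ℕ)) :=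
        Finset.sum_le_sum (fun j _ => hV (fin_strictMono_le _ hmono j))
    _ = ∑ i ∈ T, V i := by
        rw [← Finset.sum_attach T V]
        exact Fintype.sum_equiv e.toEquiv _ _ (fun j => rfl)

lemma Vmono (s : ℝ) (hs : 0 ≤ s) : Monotone (fun i : ℕ => ((i:ℝ)+1)^s) := by
  intro a b hab
  exact Real.rpow_le_rpow (by positivity) (by exact_mod_cast by omega : (a:ℝ)+1 ≤ (b:ℝ)+1) hs

lemma tot_sum (s : ℝ) (n : ℕ) :
    ∑ i : Fin (2^(n+1)), (((i:ℕ):ℝ)+1)^s = Asum s n + Bsum s n := by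
  rw [Fin.sum_univ_eq_sum_range (fun i => ((i:ℝ)+1)^s)]
  have : (2:ℕ)^(n+1) = 2^n + 2^n := by ring
  rw [this, Finset.sum_range_add]
  unfold Asum Bsum
  congr 1
  apply Finset.sum_congr rfl
  intro j _
  push_cast
  ring_nf

lemma part_sum_ge (s : ℝ) (hs : 0 ≤ s) (n : ℕ) (b : Bool)
    (σ : (Fin (n+1) → Bool) ≃ Fin (2^(n+1))) :
    Asum s n ≤ ∑ t : Fin n → Bool, (((σ (Fin.cons b t) : ℕ) : ℝ)+1)^s := by
  have hinj : Function.Injective (fun t : Fin n → Bool => ((σ (Fin.cons b t) : ℕ))) :=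
    fun a c h => Fin.cons_right_injective b (σ.injective (Fin.val_injective h))
  set T : Finset ℕ := Finset.image (fun t : Fin n → Bool => ((σ (Fin.cons b t) : ℕ))) Finset.univ with hT
  have hcard : T.card = 2^n := by
    rw [hT, Finset.card_image_of_injective _ hinj, Finset.card_univ]
    simp [Fintype.card_fun]
  have h1 : ∑ t : Fin n → Bool, (((σ (Fin.cons b t) : ℕ) : ℝ)+1)^s
      = ∑ i ∈ T, ((i:ℝ)+1)^s := by
    rw [hT, Finset.sum_image (fun a _ c _ h => hinj h)]
  rw [h1]
  have h2 := subset_sum_ge (fun i : ℕ => ((i:ℝ)+1)^s) (Vmono s hs) T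
  rw [hcard] at h2
  exact le_trans (le_of_eq rfl) h2

lemma whole_sum (s : ℝ) (n : ℕ) (b : Bool) (σ : (Fin (n+1) → Bool) ≃ Fin (2^(n+1))) :
    ∑ c : Bool, ∑ t : Fin n → Bool, (((σ (Fin.cons c t) : ℕ) : ℝ)+1)^s
    = Asum s n + Bsum s n := by
  rw [← sum_cons_decomp (fun x => (((σ x : ℕ) : ℝ)+1)^s), ← tot_sum s n]
  exact (Equiv.sum_comp σ (fun i => (((i:ℕ):ℝ)+1)^s))

lemma lower_bound (s δ : ℝ) (hs : 0 ≤ s) (hδ : δ ≤ 1/2) (n : ℕ)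
    (g : Bool → ((Fin (n+1) → Bool) ≃ Fin (2^(n+1)))) :
    (2:ℝ) ^ (-(((n:ℕ)+1 : ℕ) : ℝ)) * (2 * ((1-δ) * Asum s n + δ * Bsum s n))
    ≤ ∑ x : Fin (n+1) → Bool, ∑ y : Fin (n+1) → Bool,
        bscJoint δ (n+1) x y * (((g (y 0) x : ℕ) + 1 : ℝ)) ^ s := by
  have hm : ∀ x : Fin (n+1) → Bool,
      ∑ y : Fin (n+1) → Bool, bscJoint δ (n+1) x y * (((g (y 0) x : ℕ) + 1 : ℝ)) ^ s
      = (2:ℝ) ^ (-(((n:ℕ)+1 : ℕ) : ℝ)) *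
        ((1-δ) * (((g (x 0) x : ℕ):ℝ) + 1) ^ s + δ * (((g (!(x 0)) x : ℕ):ℝ) + 1) ^ s) :=
    fun x => marg δ (fun b => (((g b x : ℕ) + 1 : ℝ)) ^ s) x
  simp only [hm, ← Finset.mul_sum]
  apply mul_le_mul_of_nonneg_left _ (by positivity)
  -- goal: 2*((1-δ)A + δB) ≤ ∑ x, ((1-δ)*V(g (x0) x) + δ*V(g (!x0) x))
  rw [sum_cons_decomp (fun x => (1-δ) * (((g (x 0) x : ℕ):ℝ) + 1) ^ s
      + δ * (((g (!(x 0)) x : ℕ):ℝ) + 1) ^ s)]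
  simp only [Fin.cons_zero]
  rw [Fintype.sum_bool]
  rw [Finset.sum_add_distrib, Finset.sum_add_distrib, ← Finset.mul_sum, ← Finset.mul_sum,
    ← Finset.mul_sum, ← Finset.mul_sum]
  -- names
  have key : ∀ b : Bool,
      (1-δ) * (∑ t : Fin n → Bool, (((g b (Fin.cons b t) : ℕ):ℝ) + 1) ^ s)
      + δ * (∑ t : Fin n → Bool, (((g b (Fin.cons (!b) t) : ℕ):ℝ) + 1) ^ s)
      ≥ (1-δ) * Asum s n + δ * Bsum s n := by
    intro b
    have hw := whole_sum s n b (g b)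
    rw [Fintype.sum_bool] at hw
    have hsplit : ∑ t : Fin n → Bool, (((g b (Fin.cons (!b) t) : ℕ):ℝ) + 1) ^ s
        = (Asum s n + Bsum s n) - ∑ t : Fin n → Bool, (((g b (Fin.cons b t) : ℕ):ℝ) + 1) ^ s := by
      cases b <;> simp only [Bool.not_true, Bool.not_false] <;> linarith [hw]
    rw [hsplit]
    have hA := part_sum_ge s hs n b (g b)
    nlinarith [hA]
  have k1 := key true
  have k2 := key false
  simp only [Bool.not_true, Bool.not_false] at k1 k2 ⊢
  linarith

lemma csum_lb (s : ℝ) (hs : 0 < s) (m : ℕ) :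
    (m:ℝ)^(s+1)/(s+1) ≤ ∑ i ∈ Finset.range m, ((i:ℝ)+1)^s := by
  have hmono : MonotoneOn (fun x : ℝ => x ^ s) (Set.Icc 0 ((0:ℝ) + m)) :=
    fun a ha b hb hab => Real.rpow_le_rpow ha.1 hab hs.le
  have h := hmono.integral_le_sum
  simp only [zero_add] at h
  rw [integral_rpow (Or.inl (by linarith : (-1:ℝ) < s))] at h
  rw [Real.zero_rpow (by linarith : s + 1 ≠ 0)] at h
  calc (m:ℝ)^(s+1)/(s+1) = ((m:ℝ)^(s+1) - 0)/(s+1) := by ring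
    _ ≤ ∑ i ∈ Finset.range m, (((i:ℕ):ℝ)+1)^s := by
        refine le_trans h (le_of_eq (Finset.sum_congr rfl fun i _ => ?_))
        push_cast; ring_nf
    _ = ∑ i ∈ Finset.range m, ((i:ℝ)+1)^s := rfl

lemma csum_ub (s : ℝ) (hs : 0 < s) (m : ℕ) :
    ∑ i ∈ Finset.range m, ((i:ℝ)+1)^s ≤ ((m:ℝ)+1)^(s+1)/(s+1) := by
  have hmono : MonotoneOn (fun x : ℝ => (x+1) ^ s) (Set.Icc 0 ((0:ℝ) + m)) :=
    fun a ha b hb hab => Real.rpow_le_rpow (by linarith [ha.1]) (by linarith) hs.le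
  have h := hmono.sum_le_integral
  simp only [zero_add] at h
  have hi := intervalIntegral.integral_comp_add_right (a := (0:ℝ)) (b := (m:ℝ)) (fun x => x ^ s) 1
  norm_num at hi
  rw [hi, integral_rpow (Or.inl (by linarith : (-1:ℝ) < s))] at h
  have h1 : (1:ℝ)^(s+1) = 1 := Real.one_rpow _
  calc ∑ i ∈ Finset.range m, ((i:ℝ)+1)^s ≤ (((m:ℝ)+1)^(s+1) - 1^(s+1))/(s+1) := h
    _ ≤ ((m:ℝ)+1)^(s+1)/(s+1) := by
        rw [h1]
        have hsp : (0:ℝ) < s + 1 := by linarith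
        have h2 : (0:ℝ) ≤ ((m:ℝ)+1)^(s+1) := Real.rpow_nonneg (by positivity) _
        rw [div_le_div_iff₀ hsp hsp]
        nlinarith

noncomputable def csum (s : ℝ) (m : ℕ) : ℝ := ∑ i ∈ Finset.range m, ((i:ℝ)+1)^s

lemma csum_pos (s : ℝ) (m : ℕ) (hm : 0 < m) : 0 < csum s m :=
  Finset.sum_pos (fun i _ => Real.rpow_pos_of_pos (by positivity) _) (by simpa using hm.ne')

lemma q_tendsto (s : ℝ) (hs : 0 < s)
    (lb ub : ∀ m : ℕ, (m:ℝ)^(s+1)/(s+1) ≤ csum s m ∧ csum s m ≤ ((m:ℝ)+1)^(s+1)/(s+1)) :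
    Tendsto (fun n : ℕ => csum s (2^n) / csum s (2^(n+1))) atTop (nhds ((2:ℝ)^(-(s+1)))) := by
  set p := s + 1 with hp
  have hp0 : (0:ℝ) < p := by rw [hp]; linarith
  have hM : ∀ n : ℕ, ((2^n : ℕ) : ℝ) = (2:ℝ)^n := by intro n; push_cast; ring
  -- bounds
  have hlow : ∀ n : ℕ, ((2:ℝ)^n / (2*(2:ℝ)^n + 1))^p ≤ csum s (2^n) / csum s (2^(n+1)) := by
    intro n
    have hMpos : (0:ℝ) < (2:ℝ)^n := by positivity
    have hA := (lb (2^n)).1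
    have hB := (lb (2^(n+1))).2
    rw [hM n] at hA
    have h2 : (((2^(n+1) : ℕ):ℝ)+1) = 2*(2:ℝ)^n + 1 := by push_cast; ring
    rw [h2] at hB
    have hBpos := csum_pos s (2^(n+1)) (by positivity)
    have hApos' : (0:ℝ) ≤ ((2:ℝ)^n)^p / (2*(2:ℝ)^n+1)^p := by positivity
    rw [Real.div_rpow hMpos.le (by positivity)]
    rw [div_le_div_iff₀ (by positivity) hBpos]
    have e1 : ((2:ℝ)^n)^p / p ≤ csum s (2^n) := hA
    have e2 : csum s (2^(n+1)) ≤ (2*(2:ℝ)^n+1)^p / p := hB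
    have hb2 : (0:ℝ) < (2*(2:ℝ)^n+1)^p := Real.rpow_pos_of_pos (by positivity) _
    have ha2 : (0:ℝ) ≤ ((2:ℝ)^n)^p := Real.rpow_nonneg (by positivity) _
    calc ((2:ℝ)^n)^p * csum s (2^(n+1)) ≤ ((2:ℝ)^n)^p * ((2*(2:ℝ)^n+1)^p / p) :=
          mul_le_mul_of_nonneg_left hB ha2
      _ = (((2:ℝ)^n)^p / p) * (2*(2:ℝ)^n+1)^p := by ring
      _ ≤ csum s (2^n) * (2*(2:ℝ)^n+1)^p := mul_le_mul_of_nonneg_right hA hb2.le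
  have hup : ∀ n : ℕ, csum s (2^n) / csum s (2^(n+1)) ≤ (((2:ℝ)^n+1) / (2*(2:ℝ)^n))^p := by
    intro n
    have hMpos : (0:ℝ) < (2:ℝ)^n := by positivity
    have hA := (lb (2^n)).2
    have hB := (lb (2^(n+1))).1
    rw [hM n] at hA
    have h2 : ((2^(n+1) : ℕ):ℝ) = 2*(2:ℝ)^n := by push_cast; ring
    rw [h2] at hB
    have hBpos := csum_pos s (2^(n+1)) (by positivity)
    rw [Real.div_rpow (by positivity) (by positivity)]
    rw [div_le_div_iff₀ hBpos (by positivity)]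
    have hb2 : (0:ℝ) < (2*(2:ℝ)^n)^p := Real.rpow_pos_of_pos (by positivity) _
    have ha2 : (0:ℝ) ≤ ((2:ℝ)^n+1)^p := Real.rpow_nonneg (by positivity) _
    calc csum s (2^n) * (2*(2:ℝ)^n)^p ≤ (((2:ℝ)^n+1)^p / p) * (2*(2:ℝ)^n)^p :=
          mul_le_mul_of_nonneg_right hA hb2.le
      _ = ((2:ℝ)^n+1)^p * ((2*(2:ℝ)^n)^p / p) := by ring
      _ ≤ ((2:ℝ)^n+1)^p * csum s (2^(n+1)) := mul_le_mul_of_nonneg_left hB ha2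
  -- limits of the bounds
  have half_pow : Tendsto (fun n : ℕ => ((1:ℝ)/2)^n) atTop (nhds 0) :=
    tendsto_pow_atTop_nhds_zero_of_lt_one (by norm_num) (by norm_num)
  have hll : Tendsto (fun n : ℕ => ((2:ℝ)^n / (2*(2:ℝ)^n + 1))^p) atTop (nhds (((1:ℝ)/2)^p)) := by
    have base : Tendsto (fun n : ℕ => (2:ℝ)^n / (2*(2:ℝ)^n + 1)) atTop (nhds ((1:ℝ)/2)) := by
      have eqn : ∀ n : ℕ, (2:ℝ)^n / (2*(2:ℝ)^n + 1) = 1 / (2 + ((1:ℝ)/2)^n) := by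
        intro n
        have hMpos : (0:ℝ) < (2:ℝ)^n := by positivity
        rw [one_div_pow]
        field_simp
      simp only [eqn]
      have hden : Tendsto (fun n : ℕ => 2 + ((1:ℝ)/2)^n) atTop (nhds 2) := by
        simpa using tendsto_const_nhds.add half_pow
      have := hden.inv₀ (by norm_num)
      simpa [one_div] using this
    exact base.rpow_const (Or.inr hp0.le)
  have hul : Tendsto (fun n : ℕ => (((2:ℝ)^n+1) / (2*(2:ℝ)^n))^p) atTop (nhds (((1:ℝ)/2)^p)) := by
    have base : Tendsto (fun n : ℕ => ((2:ℝ)^n+1) / (2*(2:ℝ)^n)) atTop (nhds ((1:ℝ)/2)) := by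
      have eqn : ∀ n : ℕ, ((2:ℝ)^n+1) / (2*(2:ℝ)^n) = 1/2 + (1/2) * ((1:ℝ)/2)^n := by
        intro n
        have hMpos : (0:ℝ) < (2:ℝ)^n := by positivity
        rw [one_div_pow]
        field_simp
      simp only [eqn]
      have : Tendsto (fun n : ℕ => (1:ℝ)/2 + (1/2) * ((1:ℝ)/2)^n) atTop (nhds (1/2 + (1/2)*0)) :=
        tendsto_const_nhds.add (tendsto_const_nhds.mul half_pow)
      simpa using this
    exact base.rpow_const (Or.inr hp0.le)
  have hfinal : ((1:ℝ)/2)^p = (2:ℝ)^(-(s+1)) := by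
    rw [one_div, Real.inv_rpow (by norm_num : (0:ℝ) ≤ 2), ← Real.rpow_neg (by norm_num : (0:ℝ) ≤ 2), hp]
  rw [← hfinal]
  exact tendsto_of_tendsto_of_tendsto_of_le_of_le hll hul hlow hup
lemma csum_split (s : ℝ) (n : ℕ) : csum s (2^(n+1)) = Asum s n + Bsum s n := by
  rw [csum, ← Fin.sum_univ_eq_sum_range (fun i => ((i:ℝ)+1)^s), ← tot_sum s n]

lemma Gcond_eq (s δ : ℝ) (hs : 0 ≤ s) (hδ : δ ≤ 1/2) (n : ℕ) :
    GcondBSC s δ (n+1) (fun y => y 0)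
      = (2:ℝ) ^ (-(((n:ℕ)+1 : ℕ) : ℝ)) * (2 * ((1-δ) * Asum s n + δ * Bsum s n)) := by
  apply IsLeast.csInf_eq
  constructor
  · exact ⟨gOpt n, (opt_value s δ n).symm⟩
  · rintro m ⟨g, rfl⟩
    exact lower_bound s δ hs hδ n g

lemma Gunif_eq (s : ℝ) (n : ℕ) :
    Gunif s (n+1) = (2:ℝ) ^ (-(((n:ℕ)+1 : ℕ) : ℝ)) * (Asum s n + Bsum s n) := by
  rw [Gunif, ← csum_split s n]
  congr 1
  rw [csum, ← Finset.Ico_add_one_right_eq_Icc, Finset.sum_Ico_eq_sum_range]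
  apply Finset.sum_congr (by norm_num)
  intro i _
  push_cast
  ring_nf

lemma ratio_eq (s δ : ℝ) (hs : 0 < s) (hδ : δ ≤ 1/2) (n : ℕ) :
    GcondBSC s δ (n+1) (fun y => y 0) / Gunif s (n+1)
      = 2*δ + (2*(1-2*δ)) * (csum s (2^n) / csum s (2^(n+1))) := by
  rw [Gcond_eq s δ hs.le hδ n, Gunif_eq s n]
  have hA : Asum s n = csum s (2^n) := rfl
  have hAB := csum_split s n
  have hApos := csum_pos s (2^n) (by positivity)
  have hABpos := csum_pos s (2^(n+1)) (by positivity)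
  have hc : ((2:ℝ) ^ (-(((n:ℕ)+1 : ℕ) : ℝ))) ≠ 0 := by positivity
  rw [mul_div_mul_left _ _ hc]
  have hBval : Bsum s n = csum s (2^(n+1)) - csum s (2^n) := by rw [hAB]; ring_nf; rw [hA]; ring
  rw [hA, hBval]
  have hden : csum s (2^n) + (csum s (2^(n+1)) - csum s (2^n)) = csum s (2^(n+1)) := by ring
  rw [hden]
  field_simp
  ring

/-- The Dictator function `f(y^n) = y_1` achieves guessing efficiency
`(1-2δ)·2^{-s} + 2δ` over the BSC. -/
theorem dictator_guessing_efficiency (s δ : ℝ) (hs : 0 < s) (hδ0 : 0 < δ) (hδ : δ < 1 / 2) :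
    Tendsto (fun n : ℕ => GcondBSC s δ (n + 1) (fun y => y 0) / Gunif s (n + 1)) atTop
      (nhds ((1 - 2 * δ) * (2 : ℝ) ^ (-s) + 2 * δ)) := by
  have bounds : ∀ m : ℕ, (m:ℝ)^(s+1)/(s+1) ≤ csum s m ∧ csum s m ≤ ((m:ℝ)+1)^(s+1)/(s+1) :=
    fun m => ⟨csum_lb s hs m, csum_ub s hs m⟩
  have hq := q_tendsto s hs bounds bounds
  have hlim : Tendsto (fun n : ℕ => 2*δ + (2*(1-2*δ)) * (csum s (2^n) / csum s (2^(n+1))))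
      atTop (nhds (2*δ + (2*(1-2*δ)) * ((2:ℝ)^(-(s+1))))) :=
    tendsto_const_nhds.add (hq.const_mul _)
  have hval : 2*δ + (2*(1-2*δ)) * ((2:ℝ)^(-(s+1))) = (1 - 2 * δ) * (2 : ℝ) ^ (-s) + 2 * δ := by
    have h2 : (2:ℝ)^(-(s+1)) = (2:ℝ)^(-s) * (2:ℝ)^(-(1:ℝ)) := by
      rw [← Real.rpow_add (by norm_num : (0:ℝ) < 2)]
      ring_nf
    rw [h2, Real.rpow_neg_one]
    ring
  rw [← hval]
  exact hlim.congr (fun n => (ratio_eq s δ hs hδ.le n).symm)
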